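/- Let d ≥ 2, let D ⊂ ℝ^d be a bounded open set, and let 0 < γ < α < min(β, d) with α ∈ (0,2). Then sup over x, w ∈ D of the double integral ∫_D ∫_D max(min(|x-w|, |y-z|)/|x-y|, 1)^γ · max(min(|x-w|, |y-z|)/|z-w|, 1)^γ · (|x-w|^{d-α}/(|x-y|^{d-α}·|z-w|^{d-α})) · |y-z|^{β-d-α} dy dz is finite. -/

import Mathlib

open MeasureTheory Metric ENNReal
open scoped ENNReal

namespace Stmt18Aux



/-- product of negative powers (equality) -/
lemma rpow_add_of_nonpos {x : ℝ≥0∞} (hx : x ≠ ⊤) {s t : ℝ} (hs : s ≤ 0) (ht : t ≤ 0) :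
    x ^ (s + t) = x ^ s * x ^ t := by
  rcases eq_or_ne x 0 with rfl | hx0
  · rcases eq_or_lt_of_le hs with rfl | hs'
    · simp
    rcases eq_or_lt_of_le ht with rfl | ht'
    · simp
    rw [ENNReal.zero_rpow_of_neg hs', ENNReal.zero_rpow_of_neg ht',
      ENNReal.zero_rpow_of_neg (by linarith), ENNReal.top_mul_top]
  · exact ENNReal.rpow_add _ _ hx0 hx

lemma rpow_mul_rpow_le {x : ℝ≥0∞} (hx : x ≠ ⊤) {s t : ℝ} (hs : 0 < s) :
    x ^ s * x ^ t ≤ x ^ (s + t) := by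
  rcases eq_or_ne x 0 with rfl | hx0
  · rw [ENNReal.zero_rpow_of_pos hs, zero_mul]
    exact zero_le
  · rw [ENNReal.rpow_add _ _ hx0 hx]

/-- antitone in base for nonpositive exponents -/
lemma rpow_le_rpow_of_nonpos {x y : ℝ≥0∞} {s : ℝ} (hs : s ≤ 0) (h : x ≤ y) :
    y ^ s ≤ x ^ s := by
  obtain ⟨t, rfl, ht⟩ : ∃ t, s = -t ∧ 0 ≤ t := ⟨-s, by ring, by linarith⟩
  rw [ENNReal.rpow_neg, ENNReal.rpow_neg]
  exact ENNReal.inv_le_inv.2 (ENNReal.rpow_le_rpow h ht)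

/-- the min-trick -/
lemma mul_rpow_neg_le_add (A B : ℝ≥0∞) (hA : A ≠ ⊤) (hB : B ≠ ⊤) {s t : ℝ}
    (hs : 0 ≤ s) (ht : 0 ≤ t) :
    A ^ (-s) * B ^ (-t) ≤ A ^ (-(s + t)) + B ^ (-(s + t)) := by
  rcases le_total A B with h | h
  · calc A ^ (-s) * B ^ (-t) ≤ A ^ (-s) * A ^ (-t) :=
          mul_le_mul_right (rpow_le_rpow_of_nonpos (by linarith) h) _
    _ = A ^ (-(s+t)) := by
          rw [show -(s+t) = -s + -t by ring, rpow_add_of_nonpos hA (by linarith) (by linarith)]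
    _ ≤ _ := le_self_add
  · calc A ^ (-s) * B ^ (-t) ≤ B ^ (-s) * B ^ (-t) :=
          mul_le_mul_left (rpow_le_rpow_of_nonpos (by linarith) h) _
    _ = B ^ (-(s+t)) := by
          rw [show -(s+t) = -s + -t by ring, rpow_add_of_nonpos hB (by linarith) (by linarith)]
    _ ≤ _ := le_add_self




lemma rpow_le_rpow_of_nonpos' {x y : ℝ≥0∞} {s : ℝ} (hs : s ≤ 0) (h : x ≤ y) :
    y ^ s ≤ x ^ s := by
  obtain ⟨t, rfl, ht⟩ : ∃ t, s = -t ∧ 0 ≤ t := ⟨-s, by ring, by linarith⟩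
  rw [ENNReal.rpow_neg, ENNReal.rpow_neg]
  exact ENNReal.inv_le_inv.2 (ENNReal.rpow_le_rpow h ht)

lemma lintegral_ball_edist_rpow_lt_top {d : ℕ} (hd : 1 ≤ d) {p : ℝ} (hp0 : 0 ≤ p)
    (hpd : p < d) {ρ : ℝ} (hρ : 0 < ρ) :
    ∫⁻ z in ball (0 : EuclideanSpace ℝ (Fin d)) ρ, (edist z 0) ^ (-p) ∂volume < ⊤ := by
  haveI : Nonempty (Fin d) := ⟨⟨0, hd⟩⟩
  set E := EuclideanSpace ℝ (Fin d)
  haveI : Nontrivial E := inferInstance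
  set μ : Measure E := volume with hμ
  set r : ℝ := 2⁻¹ with hr
  have hr0 : 0 < r := by norm_num
  have hr1 : r < 1 := by norm_num
  -- annuli
  set A : ℕ → Set E := fun k => ball 0 (ρ * r ^ k) \ ball 0 (ρ * r ^ (k + 1)) with hA
  have hcover : ball (0 : E) ρ ⊆ {0} ∪ ⋃ k, A k := by
    intro z hz
    rcases eq_or_ne z 0 with rfl | hz0
    · exact Or.inl rfl
    right
    have hznorm : 0 < ‖z‖ := norm_pos_iff.2 hz0
    classical
    have hex : ∃ n : ℕ, z ∉ ball (0 : E) (ρ * r ^ n) := by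
      obtain ⟨n, hn⟩ := exists_pow_lt_of_lt_one (div_pos hznorm hρ) hr1
      refine ⟨n, fun hzn => ?_⟩
      rw [mem_ball_zero_iff] at hzn
      have : ρ * r ^ n < ρ * (‖z‖ / ρ) := by
        exact mul_lt_mul_of_pos_left hn hρ
      rw [mul_div_cancel₀ _ hρ.ne'] at this
      linarith
    set m := Nat.find hex with hm
    have hmem : z ∉ ball (0 : E) (ρ * r ^ m) := Nat.find_spec hex
    have hm1 : 1 ≤ m := by
      rcases Nat.eq_zero_or_pos m with h0 | h
      · exfalso; apply hmem; rw [h0]; simpa using hz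
      · exact h
    refine Set.mem_iUnion.2 ⟨m - 1, ?_, ?_⟩
    · by_contra hcon
      exact Nat.find_min hex (Nat.sub_lt hm1 one_pos) hcon
    · have : m - 1 + 1 = m := Nat.succ_pred_eq_of_pos hm1
      rw [this]; exact hmem
  calc ∫⁻ z in ball (0 : E) ρ, (edist z 0) ^ (-p) ∂μ
      ≤ ∫⁻ z in ({0} ∪ ⋃ k, A k : Set E), (edist z 0) ^ (-p) ∂μ :=
        lintegral_mono_set hcover
    _ ≤ ∫⁻ z in ({0} : Set E), (edist z 0) ^ (-p) ∂μ
        + ∫⁻ z in ⋃ k, A k, (edist z 0) ^ (-p) ∂μ := lintegral_union_le _ _ _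
    _ ≤ 0 + ∑' k, ∫⁻ z in A k, (edist z 0) ^ (-p) ∂μ := by
        gcongr
        · have : μ ({0} : Set E) = 0 := measure_singleton 0
          rw [setLIntegral_measure_zero _ _ this]
        · exact lintegral_iUnion_le _ _
    _ < ⊤ := by
        rw [zero_add]
        -- bound each annulus term
        set V : ℝ≥0∞ := ENNReal.ofReal ρ with hV
        set H : ℝ≥0∞ := ENNReal.ofReal r with hH
        have hV0 : V ≠ 0 := by simp [hV, hρ]
        have hVt : V ≠ ⊤ := ofReal_ne_top
        have hH0 : H ≠ 0 := by simp [hH]; norm_num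
        have hHt : H ≠ ⊤ := ofReal_ne_top
        have hu : ∀ k : ℕ, ENNReal.ofReal (ρ * r ^ k) = V * H ^ k := by
          intro k
          rw [ENNReal.ofReal_mul hρ.le, ENNReal.ofReal_pow hr0.le]
        have hterm : ∀ k : ℕ, ∫⁻ z in A k, (edist z 0) ^ (-p) ∂μ
            ≤ (V * H ^ (k+1)) ^ (-p) * ((V * H ^ k) ^ d * μ (ball (0:E) 1)) := by
          intro k
          have hb : ∀ z ∈ A k, (edist z 0) ^ (-p) ≤ (V * H ^ (k+1)) ^ (-p) := by
            intro z hz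
            apply rpow_le_rpow_of_nonpos' (by linarith)
            rw [← hu]
            have : ρ * r ^ (k+1) ≤ ‖z‖ := by
              have := hz.2
              rw [mem_ball_zero_iff] at this
              linarith [not_lt.1 (fun h => this h)]
            calc ENNReal.ofReal (ρ * r ^ (k+1)) ≤ ENNReal.ofReal ‖z‖ :=
                  ENNReal.ofReal_le_ofReal this
              _ = edist z 0 := by rw [edist_dist, dist_zero_right]
          calc ∫⁻ z in A k, (edist z 0) ^ (-p) ∂μ
              ≤ ∫⁻ _ in A k, (V * H ^ (k+1)) ^ (-p) ∂μ := setLIntegral_mono measurable_const hb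
            _ = (V * H ^ (k+1)) ^ (-p) * μ (A k) := setLIntegral_const _ _
            _ ≤ (V * H ^ (k+1)) ^ (-p) * ((V * H ^ k) ^ d * μ (ball (0:E) 1)) := by
                gcongr
                calc μ (A k) ≤ μ (ball 0 (ρ * r ^ k)) := measure_mono Set.diff_subset
                  _ = ENNReal.ofReal ((ρ * r ^ k) ^ Module.finrank ℝ E) * μ (ball 0 1) :=
                      Measure.addHaar_ball μ 0 (by positivity)
                  _ = (V * H ^ k) ^ d * μ (ball (0:E) 1) := by
                      rw [finrank_euclideanSpace, Fintype.card_fin,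
                        ENNReal.ofReal_pow (by positivity), hu]
        set B := μ (ball (0:E) 1) with hB
        have hBt : B ≠ ⊤ := measure_ball_lt_top.ne
        set T : ℕ → ℝ≥0∞ := fun k => (V * H ^ (k+1)) ^ (-p) * ((V * H ^ k) ^ d * B) with hT
        set W : ℝ≥0∞ := H ^ ((d:ℝ) - p) with hW
        have hW1 : W < 1 := by
          apply ENNReal.rpow_lt_one _ (by
            have : (1:ℝ) ≤ (d:ℝ) := by exact_mod_cast hd
            linarith)
          rw [hH, ENNReal.ofReal_lt_one]; norm_num
        have hTsucc : ∀ k, T (k+1) = W * T k := by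
          intro k
          have h1 : (V * H ^ (k+1+1)) ^ (-p) = H ^ (-p) * (V * H ^ (k+1)) ^ (-p) := by
            rw [show V * H ^ (k+1+1) = H * (V * H ^ (k+1)) by ring,
              ENNReal.mul_rpow_of_ne_top hHt (by
                exact ENNReal.mul_ne_top hVt (ENNReal.pow_ne_top hHt))]
          have h2 : (V * H ^ (k+1)) ^ d = H ^ d * (V * H ^ k) ^ d := by
            rw [show V * H ^ (k+1) = H * (V * H ^ k) by ring, mul_pow]
          have hWeq : W = H ^ (-p) * H ^ (d:ℕ) := by
            rw [hW, ← ENNReal.rpow_natCast H d, ← ENNReal.rpow_add _ _ hH0 hHt]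
            congr 1; ring
          rw [hT]; simp only []
          rw [h1, h2, hWeq]; ring
        have hTk : ∀ k, T k = W ^ k * T 0 := by
          intro k
          induction k with
          | zero => simp
          | succ n ih => rw [hTsucc, ih, pow_succ]; ring
        have hT0 : T 0 ≠ ⊤ := by
          apply ENNReal.mul_ne_top
          · rw [ENNReal.rpow_neg]
            intro h
            rw [ENNReal.inv_eq_top] at h
            exact (ENNReal.rpow_eq_zero_iff.1 h).elim
              (fun h' => (mul_ne_zero hV0 (pow_ne_zero _ hH0)) h'.1)
              (fun h' => (ENNReal.mul_ne_top hVt (ENNReal.pow_ne_top hHt)) h'.1)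
          · exact ENNReal.mul_ne_top (ENNReal.pow_ne_top
              (ENNReal.mul_ne_top hVt (ENNReal.pow_ne_top hHt))) hBt
        calc ∑' k, ∫⁻ z in A k, (edist z 0) ^ (-p) ∂μ ≤ ∑' k, T k := ENNReal.tsum_le_tsum hterm
          _ = ∑' k, W ^ k * T 0 := by congr 1; funext k; exact hTk k
          _ = (1 - W)⁻¹ * T 0 := by rw [ENNReal.tsum_mul_right, ENNReal.tsum_geometric]
          _ < ⊤ := by
              apply ENNReal.mul_lt_top _ hT0.lt_top
              rw [ENNReal.inv_lt_top]
              exact tsub_pos_of_lt hW1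



/-- uniform bound for the singular integral over subsets of a ball -/
lemma exists_bound_singular {d : ℕ} (hd : 1 ≤ d) {p : ℝ} (hp0 : 0 ≤ p)
    (hpd : p < d) {R : ℝ} (hR : 0 < R) :
    ∃ C : ℝ≥0∞, C ≠ ⊤ ∧ ∀ c ∈ ball (0 : EuclideanSpace ℝ (Fin d)) R,
      ∀ S : Set (EuclideanSpace ℝ (Fin d)), S ⊆ ball 0 R →
        ∫⁻ z in S, (edist c z) ^ (-p) ∂volume ≤ C := by
  set E := EuclideanSpace ℝ (Fin d)
  refine ⟨∫⁻ z in ball (0 : E) (2*R), (edist 0 z) ^ (-p) ∂volume, ?_, ?_⟩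
  · have := lintegral_ball_edist_rpow_lt_top hd hp0 hpd (by linarith : (0:ℝ) < 2*R)
    rw [lt_top_iff_ne_top] at this
    refine ne_top_of_le_ne_top this (le_of_eq ?_)
    apply lintegral_congr
    intro z
    rw [edist_comm]
  · intro c hc S hS
    have hsub : S ⊆ ball c (2*R) := by
      intro z hz
      have h1 := hS hz
      rw [mem_ball_zero_iff] at h1
      rw [mem_ball_zero_iff] at hc
      rw [mem_ball]
      calc dist z c ≤ dist z 0 + dist 0 c := dist_triangle _ _ _
        _ = ‖z‖ + ‖c‖ := by rw [dist_zero_right, dist_zero_left]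
        _ < 2*R := by linarith
    calc ∫⁻ z in S, (edist c z) ^ (-p) ∂volume
        ≤ ∫⁻ z in ball c (2*R), (edist c z) ^ (-p) ∂volume := lintegral_mono_set hsub
      _ = ∫⁻ z in ball (0:E) (2*R), (edist 0 z) ^ (-p) ∂volume := by
          have hmp : MeasurePreserving (fun x : E => x + c) volume volume :=
            measurePreserving_add_right volume c
          have hemb : MeasurableEmbedding (fun x : E => x + c) :=
            (MeasurableEquiv.addRight c).measurableEmbedding
          have := hmp.setLIntegral_comp_preimage_emb hemb
            (fun z => (edist c z) ^ (-p)) (ball c (2*R))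
          rw [← this]
          have hpre : (fun x : E => x + c) ⁻¹' ball c (2*R) = ball (0:E) (2*R) := by
            ext x
            simp only [Set.mem_preimage, mem_ball, mem_ball_zero_iff]
            rw [show c = 0 + c by rw [zero_add], show x + (0+c) = x + c by rw [zero_add],
              dist_add_right, dist_zero_right]
          rw [hpre]
          apply lintegral_congr
          intro x
          congr 1
          rw [edist_dist, edist_dist]
          congr 1
          rw [dist_eq_norm, dist_eq_norm]
          congr 1
          abel
  




lemma meas_edist_rpow {d : ℕ} (a : EuclideanSpace ℝ (Fin d)) (e : ℝ) :
    Measurable fun z : EuclideanSpace ℝ (Fin d) => (edist a z) ^ e :=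
  (measurable_const.edist measurable_id).pow_const _

lemma riesz_comp {d : ℕ} (hd : 1 ≤ d) {q r σ R : ℝ} (hq0 : 0 < q) (hqd : q < d)
    (hr0 : 0 < r) (hrd : r < d) (hσ0 : 0 < σ) (hσq : σ ≤ q) (hσr : σ ≤ r)
    (hσd : q + r - d < σ) (hR : 0 < R) :
    ∃ C : ℝ≥0∞, C ≠ ⊤ ∧ ∀ S : Set (EuclideanSpace ℝ (Fin d)), S ⊆ ball 0 R →
      ∀ a ∈ ball (0 : EuclideanSpace ℝ (Fin d)) R, ∀ b ∈ ball (0 : EuclideanSpace ℝ (Fin d)) R,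
        ∫⁻ z in S, (edist a z) ^ (-q) * (edist b z) ^ (-r) ∂volume
          ≤ C * (edist a b) ^ (-σ) := by
  set E := EuclideanSpace ℝ (Fin d)
  set u : ℝ := q + r - σ with hu
  have hu0 : 0 ≤ u := by rw [hu]; linarith
  have hud : u < d := by rw [hu]; linarith
  obtain ⟨C₀, hC₀t, hC₀⟩ := exists_bound_singular hd hu0 hud hR
  refine ⟨(2:ℝ≥0∞) ^ σ * (4 * C₀) + 1, ?_, ?_⟩
  · apply ENNReal.add_ne_top.2
    constructor
    · exact ENNReal.mul_ne_top (ENNReal.rpow_ne_top_of_nonneg hσ0.le (by norm_num))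
        (ENNReal.mul_ne_top (by norm_num) hC₀t)
    · norm_num
  intro S hS a ha b hb
  rcases eq_or_ne a b with rfl | hab
  · rw [edist_self, ENNReal.zero_rpow_of_neg (by linarith), ENNReal.mul_top (by norm_num)]
    exact le_top
  -- a ≠ b
  set t : ℝ≥0∞ := edist a b with ht
  have ht0 : t ≠ 0 := by
    rw [ht]
    simpa using hab
  have htt : t ≠ ⊤ := edist_ne_top a b
  have hts : t ^ (-σ) ≠ ⊤ := by
    rw [Ne, ENNReal.rpow_eq_top_iff]
    push_neg
    exact ⟨fun h => absurd h ht0, fun h => absurd h htt⟩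
  set P : Set E := {z | edist a z ≤ edist b z} with hP
  have hPm : MeasurableSet P :=
    measurableSet_le (measurable_const.edist measurable_id) (measurable_const.edist measurable_id)
  have hg : Measurable (fun z : E => (edist a z) ^ (-u) + (edist b z) ^ (-u)) :=
    (meas_edist_rpow a (-u)).add (meas_edist_rpow b (-u))
  -- pointwise bounds
  have key : ∀ (c c' : E), ∀ z : E, edist c c' ≤ 2 * edist c' z → {cq cr : ℝ} → 0 < cq → 0 < cr →
      σ ≤ cr → cq + cr = q + r →
      (edist c z) ^ (-cq) * (edist c' z) ^ (-cr)
        ≤ (2:ℝ≥0∞) ^ σ * (edist c c') ^ (-σ) * ((edist c z) ^ (-u) + (edist c' z) ^ (-u)) := by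
    intro c c' z hfar cq cr hcq hcr hσcr hsum
    have hzt : edist c z ≠ ⊤ := edist_ne_top _ _
    have hzt' : edist c' z ≠ ⊤ := edist_ne_top _ _
    have hhalf : edist c c' * 2⁻¹ ≤ edist c' z := by
      calc edist c c' * 2⁻¹ ≤ (2 * edist c' z) * 2⁻¹ := mul_le_mul_left hfar _
        _ = edist c' z := by
            rw [mul_comm (2:ℝ≥0∞), mul_assoc, ENNReal.mul_inv_cancel (by norm_num) (by norm_num),
              mul_one]
    have hsplit : (edist c' z) ^ (-cr) = (edist c' z) ^ (-(cr - σ)) * (edist c' z) ^ (-σ) := by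
      rw [← rpow_add_of_nonpos hzt' (by linarith) (by linarith)]
      congr 1; ring
    have hσbd : (edist c' z) ^ (-σ) ≤ (2:ℝ≥0∞) ^ σ * (edist c c') ^ (-σ) := by
      calc (edist c' z) ^ (-σ) ≤ (edist c c' * 2⁻¹) ^ (-σ) :=
            rpow_le_rpow_of_nonpos (by linarith) hhalf
        _ = (edist c c') ^ (-σ) * (2⁻¹ : ℝ≥0∞) ^ (-σ) :=
            ENNReal.mul_rpow_of_ne_top (edist_ne_top _ _) (by norm_num) _
        _ = (2:ℝ≥0∞) ^ σ * (edist c c') ^ (-σ) := by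
            rw [ENNReal.inv_rpow,
              show ((2:ℝ≥0∞) ^ (-σ))⁻¹ = 2 ^ σ by rw [ENNReal.rpow_neg, inv_inv], mul_comm]
    have hmin : (edist c z) ^ (-cq) * (edist c' z) ^ (-(cr - σ))
        ≤ (edist c z) ^ (-u) + (edist c' z) ^ (-u) := by
      have := mul_rpow_neg_le_add (edist c z) (edist c' z) hzt hzt' hcq.le
        (by linarith : (0:ℝ) ≤ cr - σ)
      rwa [show cq + (cr - σ) = u by rw [hu, ← hsum]; ring] at this
    calc (edist c z) ^ (-cq) * (edist c' z) ^ (-cr)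
        = ((edist c z) ^ (-cq) * (edist c' z) ^ (-(cr - σ))) * (edist c' z) ^ (-σ) := by
          rw [hsplit]; ring
      _ ≤ ((edist c z) ^ (-cq) * (edist c' z) ^ (-(cr - σ))) *
            ((2:ℝ≥0∞) ^ σ * (edist c c') ^ (-σ)) := mul_le_mul_right hσbd _
      _ ≤ ((edist c z) ^ (-u) + (edist c' z) ^ (-u)) *
            ((2:ℝ≥0∞) ^ σ * (edist c c') ^ (-σ)) := mul_le_mul_left hmin _
      _ = (2:ℝ≥0∞) ^ σ * (edist c c') ^ (-σ) * ((edist c z) ^ (-u) + (edist c' z) ^ (-u)) := by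
          ring
  have hsum2 : ∀ S' : Set E, S' ⊆ ball 0 R →
      ∫⁻ z in S', (edist a z) ^ (-u) + (edist b z) ^ (-u) ∂volume ≤ 2 * C₀ := by
    intro S' hS'
    rw [lintegral_add_left (meas_edist_rpow a (-u))]
    calc _ ≤ C₀ + C₀ := add_le_add (hC₀ a ha S' hS') (hC₀ b hb S' hS')
      _ = 2 * C₀ := by ring
  have hbound : ∀ (S' : Set E), S' ⊆ ball 0 R →
      (∀ z ∈ S', (edist a z) ^ (-q) * (edist b z) ^ (-r)
        ≤ (2:ℝ≥0∞) ^ σ * t ^ (-σ) * ((edist a z) ^ (-u) + (edist b z) ^ (-u))) →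
      ∫⁻ z in S', (edist a z) ^ (-q) * (edist b z) ^ (-r) ∂volume
        ≤ (2:ℝ≥0∞) ^ σ * t ^ (-σ) * (2 * C₀) := by
    intro S' hS' hpt
    calc ∫⁻ z in S', (edist a z) ^ (-q) * (edist b z) ^ (-r) ∂volume
        ≤ ∫⁻ z in S', (2:ℝ≥0∞) ^ σ * t ^ (-σ) *
            ((edist a z) ^ (-u) + (edist b z) ^ (-u)) ∂volume :=
          setLIntegral_mono (hg.const_mul _) hpt
      _ = (2:ℝ≥0∞) ^ σ * t ^ (-σ) *
            ∫⁻ z in S', (edist a z) ^ (-u) + (edist b z) ^ (-u) ∂volume :=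
          lintegral_const_mul' _ _
            (ENNReal.mul_ne_top (ENNReal.rpow_ne_top_of_nonneg hσ0.le (by norm_num)) hts)
      _ ≤ (2:ℝ≥0∞) ^ σ * t ^ (-σ) * (2 * C₀) := mul_le_mul_right (hsum2 S' hS') _
  have hSsplit : S = (S ∩ P) ∪ (S ∩ Pᶜ) := (Set.inter_union_compl S P).symm
  calc ∫⁻ z in S, (edist a z) ^ (-q) * (edist b z) ^ (-r) ∂volume
      ≤ ∫⁻ z in S ∩ P, (edist a z) ^ (-q) * (edist b z) ^ (-r) ∂volume
        + ∫⁻ z in S ∩ Pᶜ, (edist a z) ^ (-q) * (edist b z) ^ (-r) ∂volume := by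
        conv_lhs => rw [hSsplit]
        exact lintegral_union_le _ _ _
    _ ≤ (2:ℝ≥0∞) ^ σ * t ^ (-σ) * (2 * C₀) + (2:ℝ≥0∞) ^ σ * t ^ (-σ) * (2 * C₀) := by
        apply add_le_add
        · apply hbound _ (Set.inter_subset_left.trans hS)
          intro z hz
          have hzP : edist a z ≤ edist b z := hz.2
          have hfar : edist a b ≤ 2 * edist b z := by
            calc edist a b ≤ edist a z + edist z b := edist_triangle _ _ _
              _ ≤ edist b z + edist b z := by
                  rw [edist_comm z b]; exact add_le_add_left hzP _
              _ = 2 * edist b z := (two_mul _).symm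
          exact key a b z hfar hq0 hr0 hσr rfl
        · apply hbound _ (Set.inter_subset_left.trans hS)
          intro z hz
          have hzP : edist b z ≤ edist a z := by
            have := hz.2
            rw [Set.mem_compl_iff, hP, Set.mem_setOf_eq, not_le] at this
            exact this.le
          have hfar : edist b a ≤ 2 * edist a z := by
            calc edist b a ≤ edist b z + edist z a := edist_triangle _ _ _
              _ ≤ edist a z + edist a z := by
                  rw [edist_comm z a]; exact add_le_add_left hzP _
              _ = 2 * edist a z := (two_mul _).symm
          have := key b a z hfar hr0 hq0 hσq (by ring)
          calc (edist a z) ^ (-q) * (edist b z) ^ (-r)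
              = (edist b z) ^ (-r) * (edist a z) ^ (-q) := by ring
            _ ≤ (2:ℝ≥0∞) ^ σ * (edist b a) ^ (-σ) *
                  ((edist b z) ^ (-u) + (edist a z) ^ (-u)) := this
            _ = (2:ℝ≥0∞) ^ σ * t ^ (-σ) * ((edist a z) ^ (-u) + (edist b z) ^ (-u)) := by
                rw [edist_comm b a]; ring
    _ = (2:ℝ≥0∞) ^ σ * (4 * C₀) * t ^ (-σ) := by ring
    _ ≤ ((2:ℝ≥0∞) ^ σ * (4 * C₀) + 1) * t ^ (-σ) := by
        exact mul_le_mul_left le_self_add _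



lemma meas_edist_rpow' {d : ℕ} (a : EuclideanSpace ℝ (Fin d)) (e : ℝ) :
    Measurable fun z : EuclideanSpace ℝ (Fin d) => (edist z a) ^ e :=
  (measurable_id.edist measurable_const).pow_const _
/-- A^c * A^(-σ) ≤ K^(c-σ) for A ≤ K, K ≠ ⊤, 0 ≤ σ ≤ c, 0 < c. -/
lemma pow_cancel_le {A K : ℝ≥0∞} (hAK : A ≤ K) (hKt : K ≠ ⊤) {c σ : ℝ} (hc : 0 < σ)
    (hσc : σ ≤ c) : A ^ c * A ^ (-σ) ≤ K ^ (c - σ) := by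
  rcases eq_or_ne A 0 with rfl | hA0
  · rw [ENNReal.zero_rpow_of_pos (by linarith : (0:ℝ) < c), zero_mul]
    exact zero_le
  · have hAt : A ≠ ⊤ := ne_top_of_le_ne_top hKt hAK
    rw [← ENNReal.rpow_add _ _ hA0 hAt]
    exact ENNReal.rpow_le_rpow hAK (by linarith)

lemma term_bound {d : ℕ} (hd : 1 ≤ d) {R : ℝ} (hR : 0 < R)
    {D : Set (EuclideanSpace ℝ (Fin d))} (hDR : D ⊆ ball 0 R)
    {p q c e : ℝ} (hp0 : 0 < p) (hpd : p < d) (hq0 : 0 < q) (hqd : q < d) (hc0 : 0 < c)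
    (hed : -(d:ℝ) < e) (h1 : q - e - d < c + d - p) :
    ∃ C : ℝ≥0∞, C ≠ ⊤ ∧ ∀ x ∈ D, ∀ w ∈ D,
      ∫⁻ y in D, ∫⁻ z in D, (edist x w) ^ c * (edist x y) ^ (-p) *
        ((edist z w) ^ (-q) * (edist y z) ^ e) ∂volume ∂volume ≤ C := by
  set K : ℝ≥0∞ := ENNReal.ofReal (2 * R) with hK
  have hKt : K ≠ ⊤ := ofReal_ne_top
  have hedistK : ∀ v ∈ D, ∀ v' ∈ D, edist v v' ≤ K := by
    intro v hv v' hv'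
    rw [edist_dist, hK]
    apply ENNReal.ofReal_le_ofReal
    have h1 := mem_ball_zero_iff.1 (hDR hv)
    have h2 := mem_ball_zero_iff.1 (hDR hv')
    calc dist v v' ≤ dist v 0 + dist 0 v' := dist_triangle _ _ _
      _ = ‖v‖ + ‖v'‖ := by rw [dist_zero_right, dist_zero_left]
      _ ≤ 2 * R := by linarith
  rcases le_or_gt 0 e with he | he
  · -- easy case : bounded kernel in s
    obtain ⟨C₀, hC₀t, hC₀⟩ := exists_bound_singular hd hq0.le hqd hR
    obtain ⟨C₁, hC₁t, hC₁⟩ := exists_bound_singular hd hp0.le hpd hR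
    refine ⟨K ^ c * (K ^ e * C₀ * C₁), by
      exact ENNReal.mul_ne_top (ENNReal.rpow_ne_top_of_nonneg hc0.le hKt)
        (ENNReal.mul_ne_top (ENNReal.mul_ne_top
          (ENNReal.rpow_ne_top_of_nonneg he hKt) hC₀t) hC₁t), ?_⟩
    intro x hx w hw
    have inner_le : ∀ y ∈ D, ∫⁻ z in D, (edist z w) ^ (-q) * (edist y z) ^ e ∂volume
        ≤ K ^ e * C₀ := by
      intro y hy
      calc ∫⁻ z in D, (edist z w) ^ (-q) * (edist y z) ^ e ∂volume
          ≤ ∫⁻ z in D, K ^ e * (edist w z) ^ (-q) ∂volume := by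
            apply setLIntegral_mono (by
              exact (meas_edist_rpow w (-q)).const_mul _)
            intro z hz
            rw [edist_comm z w]
            calc (edist w z) ^ (-q) * (edist y z) ^ e
                ≤ (edist w z) ^ (-q) * K ^ e :=
                  mul_le_mul_right (ENNReal.rpow_le_rpow (hedistK y hy z hz) he) _
              _ = K ^ e * (edist w z) ^ (-q) := mul_comm _ _
        _ = K ^ e * ∫⁻ z in D, (edist w z) ^ (-q) ∂volume :=
            lintegral_const_mul' _ _ (ENNReal.rpow_ne_top_of_nonneg he hKt)
        _ ≤ K ^ e * C₀ := mul_le_mul_right (hC₀ w (hDR hw) D hDR) _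
    calc ∫⁻ y in D, ∫⁻ z in D, (edist x w) ^ c * (edist x y) ^ (-p) *
          ((edist z w) ^ (-q) * (edist y z) ^ e) ∂volume ∂volume
        ≤ ∫⁻ y in D, (edist x w) ^ c * (edist x y) ^ (-p) * (K ^ e * C₀) ∂volume := by
          apply setLIntegral_mono (by
            exact ((meas_edist_rpow x (-p)).const_mul _).mul_const _)
          intro y hy
          rw [lintegral_const_mul _ ((meas_edist_rpow' w (-q)).fun_mul (meas_edist_rpow y e))]
          exact mul_le_mul_right (inner_le y hy) _
      _ = (edist x w) ^ c * (K ^ e * C₀) * ∫⁻ y in D, (edist x y) ^ (-p) ∂volume := by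
          rw [← lintegral_const_mul' ((edist x w) ^ c * (K ^ e * C₀)) _
            (ENNReal.mul_ne_top (ENNReal.rpow_ne_top_of_nonneg hc0.le
              (ne_top_of_le_ne_top hKt (hedistK x hx w hw)))
              (ENNReal.mul_ne_top (ENNReal.rpow_ne_top_of_nonneg he hKt) hC₀t))]
          apply lintegral_congr
          intro y
          ring
      _ ≤ (edist x w) ^ c * (K ^ e * C₀) * C₁ :=
          mul_le_mul_right (hC₁ x (hDR hx) D hDR) _
      _ ≤ K ^ c * (K ^ e * C₀) * C₁ :=
          mul_le_mul_left (mul_le_mul_left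
            (ENNReal.rpow_le_rpow (hedistK x hx w hw) hc0.le) _) _
      _ = K ^ c * (K ^ e * C₀ * C₁) := by ring
  · -- singular case
    set r : ℝ := -e with hr
    have hr0 : 0 < r := by rw [hr]; linarith
    have hrd : r < d := by rw [hr]; linarith
    have h1' : q + r - d < c + d - p := by rw [hr]; linarith
    set m : ℝ := max 0 (q + r - d) with hm
    set σ₁ : ℝ := min (min q r) ((m + (c + d - p)) / 2) with hσ₁
    have hcd : 0 < c + d - p := by linarith
    have hm1 : m < c + d - p := by
      rw [hm, max_lt_iff]
      exact ⟨hcd, h1'⟩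
    have hσ₁0 : 0 < σ₁ := by
      apply lt_min (lt_min hq0 hr0)
      have : 0 ≤ m := le_max_left _ _
      linarith
    have hσ₁q : σ₁ ≤ q := (min_le_left _ _).trans (min_le_left _ _)
    have hσ₁r : σ₁ ≤ r := (min_le_left _ _).trans (min_le_right _ _)
    have hσ₁d : q + r - d < σ₁ := by
      apply lt_min (lt_min (by linarith) (by linarith))
      have : q + r - d ≤ m := le_max_right _ _
      linarith
    have hσ₁cdp : σ₁ < c + d - p := by
      calc σ₁ ≤ (m + (c + d - p)) / 2 := min_le_right _ _
        _ < c + d - p := by linarith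
    have hσ₁dd : σ₁ < d := by
      calc σ₁ ≤ q := hσ₁q
        _ < d := hqd
    set σ₂ : ℝ := min (min p σ₁) c with hσ₂
    have hσ₂0 : 0 < σ₂ := lt_min (lt_min hp0 hσ₁0) hc0
    have hσ₂p : σ₂ ≤ p := (min_le_left _ _).trans (min_le_left _ _)
    have hσ₂σ₁ : σ₂ ≤ σ₁ := (min_le_left _ _).trans (min_le_right _ _)
    have hσ₂c : σ₂ ≤ c := min_le_right _ _
    have hσ₂d : p + σ₁ - d < σ₂ := by
      apply lt_min (lt_min (by linarith) (by linarith))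
      linarith
    obtain ⟨C₁, hC₁t, hC₁⟩ := riesz_comp hd hq0 hqd hr0 hrd hσ₁0 hσ₁q hσ₁r hσ₁d hR
    obtain ⟨C₂, hC₂t, hC₂⟩ := riesz_comp hd hp0 hpd hσ₁0 hσ₁dd hσ₂0 hσ₂p hσ₂σ₁ hσ₂d hR
    refine ⟨C₁ * C₂ * K ^ (c - σ₂), by
      exact ENNReal.mul_ne_top (ENNReal.mul_ne_top hC₁t hC₂t)
        (ENNReal.rpow_ne_top_of_nonneg (by linarith) hKt), ?_⟩
    intro x hx w hw
    have inner_le : ∀ y ∈ D, ∫⁻ z in D, (edist z w) ^ (-q) * (edist y z) ^ e ∂volume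
        ≤ C₁ * (edist w y) ^ (-σ₁) := by
      intro y hy
      have : ∫⁻ z in D, (edist z w) ^ (-q) * (edist y z) ^ e ∂volume
          = ∫⁻ z in D, (edist w z) ^ (-q) * (edist y z) ^ (-r) ∂volume := by
        apply lintegral_congr
        intro z
        rw [edist_comm z w, hr, neg_neg]
      rw [this]
      exact hC₁ D hDR w (hDR hw) y (hDR hy)
    have hAt : (edist x w) ^ c ≠ ⊤ :=
      ENNReal.rpow_ne_top_of_nonneg hc0.le (ne_top_of_le_ne_top hKt (hedistK x hx w hw))
    calc ∫⁻ y in D, ∫⁻ z in D, (edist x w) ^ c * (edist x y) ^ (-p) *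
          ((edist z w) ^ (-q) * (edist y z) ^ e) ∂volume ∂volume
        ≤ ∫⁻ y in D, (edist x w) ^ c * (C₁ * ((edist x y) ^ (-p) * (edist w y) ^ (-σ₁)))
            ∂volume := by
          apply setLIntegral_mono (by
            exact (((meas_edist_rpow x (-p)).mul (meas_edist_rpow w (-σ₁))).const_mul
              C₁).const_mul _)
          intro y hy
          rw [lintegral_const_mul _ ((meas_edist_rpow' w (-q)).fun_mul (meas_edist_rpow y e))]
          calc (edist x w) ^ c * (edist x y) ^ (-p) *
                ∫⁻ z in D, (edist z w) ^ (-q) * (edist y z) ^ e ∂volume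
              ≤ (edist x w) ^ c * (edist x y) ^ (-p) * (C₁ * (edist w y) ^ (-σ₁)) :=
                mul_le_mul_right (inner_le y hy) _
            _ = (edist x w) ^ c * (C₁ * ((edist x y) ^ (-p) * (edist w y) ^ (-σ₁))) := by
                ring
      _ = (edist x w) ^ c * (C₁ *
            ∫⁻ y in D, (edist x y) ^ (-p) * (edist w y) ^ (-σ₁) ∂volume) := by
          rw [lintegral_const_mul' _ _ hAt, lintegral_const_mul' _ _ hC₁t]
      _ ≤ (edist x w) ^ c * (C₁ * (C₂ * (edist x w) ^ (-σ₂))) :=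
          mul_le_mul_right (mul_le_mul_right (hC₂ D hDR x (hDR hx) w (hDR hw)) _) _
      _ = C₁ * C₂ * ((edist x w) ^ c * (edist x w) ^ (-σ₂)) := by ring
      _ ≤ C₁ * C₂ * K ^ (c - σ₂) :=
          mul_le_mul_right (pow_cancel_le (hedistK x hx w hw) hKt hσ₂0 hσ₂c) _



/-- `ofReal` of a real rpow of a nonneg real is at most the ENNReal rpow. -/
lemma ofReal_rpow_le {t : ℝ} (ht : 0 ≤ t) (e : ℝ) :
    ENNReal.ofReal (t ^ e) ≤ (ENNReal.ofReal t) ^ e := by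
  rcases eq_or_lt_of_le ht with rfl | ht'
  · rcases lt_trichotomy e 0 with he | rfl | he
    · rw [Real.zero_rpow he.ne, ENNReal.ofReal_zero]
      exact zero_le
    · simp
    · rw [Real.zero_rpow he.ne', ENNReal.ofReal_zero, ENNReal.zero_rpow_of_pos he]
  · rw [ENNReal.ofReal_rpow_of_pos ht']

/-- real max bound -/
lemma max_rpow_le {t γ : ℝ} (ht : 0 ≤ t) (hγ : 0 ≤ γ) : max t 1 ^ γ ≤ t ^ γ + 1 := by
  rcases le_total t 1 with h | h
  · rw [max_eq_right h, Real.one_rpow]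
    have : 0 ≤ t ^ γ := Real.rpow_nonneg ht _
    linarith
  · rw [max_eq_left h]
    have : 0 ≤ (1:ℝ) := zero_le_one
    linarith [Real.rpow_nonneg ht γ]

/-- bound for the first two factors -/
lemma factor_bound {d : ℕ} {γ : ℝ} (hγ0 : 0 < γ) (x w y z u v : EuclideanSpace ℝ (Fin d)) :
    ENNReal.ofReal ((max (min (dist x w) (dist y z) / dist u v) 1) ^ γ)
      ≤ 1 + (edist y z) ^ γ * (edist u v) ^ (-γ) := by
  set m : ℝ := min (dist x w) (dist y z) with hm
  have hm0 : 0 ≤ m := le_min dist_nonneg dist_nonneg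
  rcases eq_or_lt_of_le (dist_nonneg : (0:ℝ) ≤ dist u v) with h0 | hpos
  · have hmax : max (m / dist u v) 1 = 1 := by
      rw [← h0]
      simp
    rw [hmax, Real.one_rpow, ENNReal.ofReal_one]
    exact le_self_add
  · calc ENNReal.ofReal ((max (m / dist u v) 1) ^ γ)
        ≤ ENNReal.ofReal ((m / dist u v) ^ γ + 1) := by
          apply ENNReal.ofReal_le_ofReal
          exact max_rpow_le (div_nonneg hm0 dist_nonneg) hγ0.le
      _ = ENNReal.ofReal ((m / dist u v) ^ γ) + 1 := by
          rw [ENNReal.ofReal_add (Real.rpow_nonneg (div_nonneg hm0 dist_nonneg) _) zero_le_one,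
            ENNReal.ofReal_one]
      _ ≤ (edist y z) ^ γ * (edist u v) ^ (-γ) + 1 := by
          apply add_le_add_left
          calc ENNReal.ofReal ((m / dist u v) ^ γ)
              ≤ ENNReal.ofReal ((dist y z / dist u v) ^ γ) := by
                apply ENNReal.ofReal_le_ofReal
                apply Real.rpow_le_rpow (div_nonneg hm0 dist_nonneg) ?_ hγ0.le
                gcongr
                exact min_le_right _ _
            _ ≤ (ENNReal.ofReal (dist y z / dist u v)) ^ γ :=
                ofReal_rpow_le (div_nonneg dist_nonneg dist_nonneg) _
            _ = ((edist y z) * (edist u v)⁻¹) ^ γ := by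
                rw [ENNReal.ofReal_div_of_pos hpos, edist_dist, edist_dist, div_eq_mul_inv]
            _ = (edist y z) ^ γ * (edist u v) ^ (-γ) := by
                rw [ENNReal.mul_rpow_of_nonneg _ _ hγ0.le, ENNReal.inv_rpow,
                  ← ENNReal.rpow_neg]
      _ = 1 + (edist y z) ^ γ * (edist u v) ^ (-γ) := add_comm _ _



lemma kernel_bound {d : ℕ} {c : ℝ} (hc : 0 < c) (x w y z : EuclideanSpace ℝ (Fin d)) :
    ENNReal.ofReal (dist x w ^ c / (dist x y ^ c * dist z w ^ c))
      ≤ (edist x w) ^ c * ((edist x y) ^ (-c) * (edist z w) ^ (-c)) := by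
  have heq : dist x w ^ c / (dist x y ^ c * dist z w ^ c)
      = dist x w ^ c * (dist x y ^ (-c) * dist z w ^ (-c)) := by
    rw [div_eq_mul_inv, mul_inv, Real.rpow_neg dist_nonneg, Real.rpow_neg dist_nonneg]
  rw [heq, ENNReal.ofReal_mul (Real.rpow_nonneg dist_nonneg _),
    ENNReal.ofReal_mul (Real.rpow_nonneg dist_nonneg _)]
  calc ENNReal.ofReal (dist x w ^ c) *
        (ENNReal.ofReal (dist x y ^ (-c)) * ENNReal.ofReal (dist z w ^ (-c)))
      ≤ (ENNReal.ofReal (dist x w)) ^ c *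
        ((ENNReal.ofReal (dist x y)) ^ (-c) * (ENNReal.ofReal (dist z w)) ^ (-c)) := by
        apply mul_le_mul' (ofReal_rpow_le dist_nonneg _)
        exact mul_le_mul' (ofReal_rpow_le dist_nonneg _) (ofReal_rpow_le dist_nonneg _)
    _ = (edist x w) ^ c * ((edist x y) ^ (-c) * (edist z w) ^ (-c)) := by
        rw [edist_dist, edist_dist, edist_dist]

lemma pointwise_bound {d : ℕ} {α β γ : ℝ} (hγ0 : 0 < γ) (hγα : γ < α) (hαd : α < d)
    (x w y z : EuclideanSpace ℝ (Fin d)) :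
    ENNReal.ofReal (
        (max (min (dist x w) (dist y z) / dist x y) 1) ^ γ *
          (max (min (dist x w) (dist y z) / dist z w) 1) ^ γ *
          (dist x w ^ ((d : ℝ) - α) / (dist x y ^ ((d : ℝ) - α) * dist z w ^ ((d : ℝ) - α))) *
          dist y z ^ (β - d - α))
      ≤ (edist x w) ^ ((d:ℝ)-α) * (edist x y) ^ (-((d:ℝ)-α)) *
          ((edist z w) ^ (-((d:ℝ)-α)) * (edist y z) ^ (β-d-α))
        + (edist x w) ^ ((d:ℝ)-α) * (edist x y) ^ (-(((d:ℝ)-α)+γ)) *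
          ((edist z w) ^ (-((d:ℝ)-α)) * (edist y z) ^ (β-d-α+γ))
        + ((edist x w) ^ ((d:ℝ)-α) * (edist x y) ^ (-((d:ℝ)-α)) *
          ((edist z w) ^ (-(((d:ℝ)-α)+γ)) * (edist y z) ^ (β-d-α+γ))
        + (edist x w) ^ ((d:ℝ)-α) * (edist x y) ^ (-(((d:ℝ)-α)+γ)) *
          ((edist z w) ^ (-(((d:ℝ)-α)+γ)) * (edist y z) ^ (β-d-α+2*γ))) := by
  set c : ℝ := (d:ℝ) - α with hc
  have hc0 : 0 < c := by rw [hc]; linarith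
  set e : ℝ := β - d - α with he
  set A := edist x w with hA
  set R1 := edist x y with hR1
  set R2 := edist z w with hR2
  set S := edist y z with hS
  have hR1t : R1 ≠ ⊤ := edist_ne_top _ _
  have hR2t : R2 ≠ ⊤ := edist_ne_top _ _
  have hSt : S ≠ ⊤ := edist_ne_top _ _
  set X1 := S ^ γ * R1 ^ (-γ) with hX1
  set X2 := S ^ γ * R2 ^ (-γ) with hX2
  have step1 : ENNReal.ofReal (
      (max (min (dist x w) (dist y z) / dist x y) 1) ^ γ *
        (max (min (dist x w) (dist y z) / dist z w) 1) ^ γ *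
        (dist x w ^ c / (dist x y ^ c * dist z w ^ c)) * dist y z ^ e)
      ≤ (1 + X1) * (1 + X2) * (A ^ c * (R1 ^ (-c) * R2 ^ (-c))) * S ^ e := by
    rw [ENNReal.ofReal_mul (by positivity), ENNReal.ofReal_mul (by positivity),
      ENNReal.ofReal_mul (by positivity)]
    refine mul_le_mul' (mul_le_mul' (mul_le_mul' ?_ ?_) ?_) ?_
    · exact factor_bound hγ0 x w y z x y
    · exact factor_bound hγ0 x w y z z w
    · exact kernel_bound hc0 x w y z
    · rw [hS, edist_dist]
      exact ofReal_rpow_le dist_nonneg _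
  refine step1.trans ?_
  have hexp : (1 + X1) * (1 + X2) * (A ^ c * (R1 ^ (-c) * R2 ^ (-c))) * S ^ e
      = A ^ c * (R1 ^ (-c) * (R2 ^ (-c) * S ^ e))
        + A ^ c * ((R1 ^ (-γ) * R1 ^ (-c)) * (R2 ^ (-c) * (S ^ γ * S ^ e)))
        + (A ^ c * (R1 ^ (-c) * ((R2 ^ (-γ) * R2 ^ (-c)) * (S ^ γ * S ^ e)))
        + A ^ c * ((R1 ^ (-γ) * R1 ^ (-c)) * ((R2 ^ (-γ) * R2 ^ (-c)) *
            ((S ^ γ * S ^ γ) * S ^ e)))) := by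
    rw [hX1, hX2]; ring
  rw [hexp]
  have hR1e : R1 ^ (-γ) * R1 ^ (-c) = R1 ^ (-(c+γ)) := by
    rw [show -(c+γ) = -γ + -c by ring, rpow_add_of_nonpos hR1t (by linarith) (by linarith)]
  have hR2e : R2 ^ (-γ) * R2 ^ (-c) = R2 ^ (-(c+γ)) := by
    rw [show -(c+γ) = -γ + -c by ring, rpow_add_of_nonpos hR2t (by linarith) (by linarith)]
  have hSe1 : S ^ γ * S ^ e ≤ S ^ (e+γ) := by
    rw [show e + γ = γ + e by ring]
    exact rpow_mul_rpow_le hSt hγ0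
  have hSe2 : (S ^ γ * S ^ γ) * S ^ e ≤ S ^ (e+2*γ) := by
    calc (S ^ γ * S ^ γ) * S ^ e ≤ S ^ (γ + γ) * S ^ e :=
          mul_le_mul_left (rpow_mul_rpow_le hSt hγ0) _
      _ ≤ S ^ (γ + γ + e) := rpow_mul_rpow_le hSt (by linarith)
      _ = S ^ (e+2*γ) := by rw [show γ + γ + e = e + 2*γ by ring]
  refine add_le_add (add_le_add ?_ ?_) (add_le_add ?_ ?_)
  · exact le_of_eq (by ring)
  · rw [hR1e]
    calc A ^ c * (R1 ^ (-(c+γ)) * (R2 ^ (-c) * (S ^ γ * S ^ e)))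
        ≤ A ^ c * (R1 ^ (-(c+γ)) * (R2 ^ (-c) * S ^ (e+γ))) := by
          exact mul_le_mul_right (mul_le_mul_right (mul_le_mul_right hSe1 _) _) _
      _ = A ^ c * R1 ^ (-(c+γ)) * (R2 ^ (-c) * S ^ (e+γ)) := by ring
  · rw [hR2e]
    calc A ^ c * (R1 ^ (-c) * (R2 ^ (-(c+γ)) * (S ^ γ * S ^ e)))
        ≤ A ^ c * (R1 ^ (-c) * (R2 ^ (-(c+γ)) * S ^ (e+γ))) := by
          exact mul_le_mul_right (mul_le_mul_right (mul_le_mul_right hSe1 _) _) _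
      _ = A ^ c * R1 ^ (-c) * (R2 ^ (-(c+γ)) * S ^ (e+γ)) := by ring
  · rw [hR1e, hR2e]
    calc A ^ c * (R1 ^ (-(c+γ)) * (R2 ^ (-(c+γ)) * ((S ^ γ * S ^ γ) * S ^ e)))
        ≤ A ^ c * (R1 ^ (-(c+γ)) * (R2 ^ (-(c+γ)) * S ^ (e+2*γ))) := by
          exact mul_le_mul_right (mul_le_mul_right (mul_le_mul_right hSe2 _) _) _
      _ = A ^ c * R1 ^ (-(c+γ)) * (R2 ^ (-(c+γ)) * S ^ (e+2*γ)) := by ring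


end Stmt18Aux

open Stmt18Aux
theorem stmt18 {d : ℕ} (hd : 2 ≤ d) {D : Set (EuclideanSpace ℝ (Fin d))}
    (hDopen : IsOpen D) (hDbdd : Bornology.IsBounded D)
    {α β γ : ℝ} (hγ0 : 0 < γ) (hγα : γ < α) (hα0 : 0 < α) (hα2 : α < 2)
    (hαβ : α < β) (hαd : α < d) :
    ∃ C : ℝ≥0∞, C ≠ ⊤ ∧ ∀ x ∈ D, ∀ w ∈ D,
      (∫⁻ y in D, ∫⁻ z in D, ENNReal.ofReal (
        (max (min (dist x w) (dist y z) / dist x y) 1) ^ γ *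
          (max (min (dist x w) (dist y z) / dist z w) 1) ^ γ *
          (dist x w ^ ((d : ℝ) - α) / (dist x y ^ ((d : ℝ) - α) * dist z w ^ ((d : ℝ) - α))) *
          dist y z ^ (β - d - α))) ≤ C := by
  have hd1 : 1 ≤ d := le_trans (by norm_num) hd
  have hd1' : (1:ℝ) ≤ (d:ℝ) := by exact_mod_cast hd1
  obtain ⟨R, hR0, hDR⟩ := hDbdd.subset_ball_lt 0 0
  set c : ℝ := (d:ℝ) - α with hc
  have hc0 : 0 < c := by rw [hc]; linarith
  have hcd : c < d := by rw [hc]; linarith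
  have hcγd : c + γ < d := by rw [hc]; linarith
  have hcγ0 : 0 < c + γ := by linarith
  -- four term bounds
  obtain ⟨C₁, hC₁t, hC₁⟩ := term_bound hd1 hR0 hDR hc0 hcd hc0 hcd hc0
    (by push_cast; linarith : -(d:ℝ) < β - d - α)
    (by push_cast [hc]; linarith : c - (β - (d:ℝ) - α) - d < c + d - c)
  obtain ⟨C₂, hC₂t, hC₂⟩ := term_bound hd1 hR0 hDR hcγ0 hcγd hc0 hcd hc0
    (by push_cast; linarith : -(d:ℝ) < β - d - α + γ)
    (by push_cast [hc]; linarith : c - (β - (d:ℝ) - α + γ) - d < c + d - (c + γ))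
  obtain ⟨C₃, hC₃t, hC₃⟩ := term_bound hd1 hR0 hDR hc0 hcd hcγ0 hcγd hc0
    (by push_cast; linarith : -(d:ℝ) < β - d - α + γ)
    (by push_cast [hc]; linarith : c + γ - (β - (d:ℝ) - α + γ) - d < c + d - c)
  obtain ⟨C₄, hC₄t, hC₄⟩ := term_bound hd1 hR0 hDR hcγ0 hcγd hcγ0 hcγd hc0
    (by push_cast; linarith : -(d:ℝ) < β - d - α + 2*γ)
    (by push_cast [hc]; linarith : c + γ - (β - (d:ℝ) - α + 2*γ) - d < c + d - (c + γ))
  refine ⟨C₁ + C₂ + (C₃ + C₄), by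
    exact ENNReal.add_ne_top.2 ⟨ENNReal.add_ne_top.2 ⟨hC₁t, hC₂t⟩,
      ENNReal.add_ne_top.2 ⟨hC₃t, hC₄t⟩⟩, ?_⟩
  intro x hx w hw
  have step1 : (∫⁻ y in D, ∫⁻ z in D, ENNReal.ofReal (
        (max (min (dist x w) (dist y z) / dist x y) 1) ^ γ *
          (max (min (dist x w) (dist y z) / dist z w) 1) ^ γ *
          (dist x w ^ ((d : ℝ) - α) / (dist x y ^ ((d : ℝ) - α) * dist z w ^ ((d : ℝ) - α))) *
          dist y z ^ (β - d - α)))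
      ≤ ∫⁻ y in D, ∫⁻ z in D,
          ((edist x w) ^ c * (edist x y) ^ (-c) *
            ((edist z w) ^ (-c) * (edist y z) ^ (β-(d:ℝ)-α))
          + (edist x w) ^ c * (edist x y) ^ (-(c+γ)) *
            ((edist z w) ^ (-c) * (edist y z) ^ (β-(d:ℝ)-α+γ))
          + ((edist x w) ^ c * (edist x y) ^ (-c) *
            ((edist z w) ^ (-(c+γ)) * (edist y z) ^ (β-(d:ℝ)-α+γ))
          + (edist x w) ^ c * (edist x y) ^ (-(c+γ)) *
            ((edist z w) ^ (-(c+γ)) * (edist y z) ^ (β-(d:ℝ)-α+2*γ)))) ∂volume ∂volume := by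
    apply lintegral_mono
    intro y
    apply lintegral_mono
    intro z
    exact pointwise_bound hγ0 hγα hαd x w y z
  refine step1.trans ?_
  have measz : ∀ (y : EuclideanSpace ℝ (Fin d)) (pp qq ee : ℝ),
      Measurable (fun z : EuclideanSpace ℝ (Fin d) =>
        (edist x w) ^ c * (edist x y) ^ (-pp) * ((edist z w) ^ (-qq) * (edist y z) ^ ee)) := by
    intro y pp qq ee
    exact ((meas_edist_rpow' w (-qq)).mul (meas_edist_rpow y ee)).const_mul _
  have measI : ∀ (pp qq ee : ℝ), Measurable (fun y : EuclideanSpace ℝ (Fin d) =>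
      ∫⁻ z in D, (edist x w) ^ c * (edist x y) ^ (-pp) *
        ((edist z w) ^ (-qq) * (edist y z) ^ ee) ∂volume) := by
    intro pp qq ee
    apply Measurable.lintegral_prod_right'
      (f := fun yz : EuclideanSpace ℝ (Fin d) × EuclideanSpace ℝ (Fin d) =>
        (edist x w) ^ c * (edist x yz.1) ^ (-pp) *
          ((edist yz.2 w) ^ (-qq) * (edist yz.1 yz.2) ^ ee))
    apply Measurable.mul
    · exact (((measurable_const.edist measurable_fst)).pow_const _).const_mul _
    · exact ((measurable_snd.edist measurable_const).pow_const _).mul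
        ((measurable_fst.edist measurable_snd).pow_const _)
  have hinner : ∀ y : EuclideanSpace ℝ (Fin d),
      (∫⁻ z in D,
          ((edist x w) ^ c * (edist x y) ^ (-c) *
            ((edist z w) ^ (-c) * (edist y z) ^ (β-(d:ℝ)-α))
          + (edist x w) ^ c * (edist x y) ^ (-(c+γ)) *
            ((edist z w) ^ (-c) * (edist y z) ^ (β-(d:ℝ)-α+γ))
          + ((edist x w) ^ c * (edist x y) ^ (-c) *
            ((edist z w) ^ (-(c+γ)) * (edist y z) ^ (β-(d:ℝ)-α+γ))
          + (edist x w) ^ c * (edist x y) ^ (-(c+γ)) *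
            ((edist z w) ^ (-(c+γ)) * (edist y z) ^ (β-(d:ℝ)-α+2*γ)))) ∂volume)
      = (∫⁻ z in D, (edist x w) ^ c * (edist x y) ^ (-c) *
            ((edist z w) ^ (-c) * (edist y z) ^ (β-(d:ℝ)-α)) ∂volume)
        + (∫⁻ z in D, (edist x w) ^ c * (edist x y) ^ (-(c+γ)) *
            ((edist z w) ^ (-c) * (edist y z) ^ (β-(d:ℝ)-α+γ)) ∂volume)
        + ((∫⁻ z in D, (edist x w) ^ c * (edist x y) ^ (-c) *
            ((edist z w) ^ (-(c+γ)) * (edist y z) ^ (β-(d:ℝ)-α+γ)) ∂volume)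
        + (∫⁻ z in D, (edist x w) ^ c * (edist x y) ^ (-(c+γ)) *
            ((edist z w) ^ (-(c+γ)) * (edist y z) ^ (β-(d:ℝ)-α+2*γ)) ∂volume)) := by
    intro y
    rw [lintegral_add_left (Measurable.fun_add (measz y c c (β-(d:ℝ)-α))
        (measz y (c+γ) c (β-(d:ℝ)-α+γ))),
      lintegral_add_left (measz y c c (β-(d:ℝ)-α)),
      lintegral_add_left (measz y c (c+γ) (β-(d:ℝ)-α+γ))]
  calc ∫⁻ y in D, (∫⁻ z in D,
          ((edist x w) ^ c * (edist x y) ^ (-c) *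
            ((edist z w) ^ (-c) * (edist y z) ^ (β-(d:ℝ)-α))
          + (edist x w) ^ c * (edist x y) ^ (-(c+γ)) *
            ((edist z w) ^ (-c) * (edist y z) ^ (β-(d:ℝ)-α+γ))
          + ((edist x w) ^ c * (edist x y) ^ (-c) *
            ((edist z w) ^ (-(c+γ)) * (edist y z) ^ (β-(d:ℝ)-α+γ))
          + (edist x w) ^ c * (edist x y) ^ (-(c+γ)) *
            ((edist z w) ^ (-(c+γ)) * (edist y z) ^ (β-(d:ℝ)-α+2*γ)))) ∂volume) ∂volume
      = ∫⁻ y in D,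
          ((∫⁻ z in D, (edist x w) ^ c * (edist x y) ^ (-c) *
            ((edist z w) ^ (-c) * (edist y z) ^ (β-(d:ℝ)-α)) ∂volume)
        + (∫⁻ z in D, (edist x w) ^ c * (edist x y) ^ (-(c+γ)) *
            ((edist z w) ^ (-c) * (edist y z) ^ (β-(d:ℝ)-α+γ)) ∂volume)
        + ((∫⁻ z in D, (edist x w) ^ c * (edist x y) ^ (-c) *
            ((edist z w) ^ (-(c+γ)) * (edist y z) ^ (β-(d:ℝ)-α+γ)) ∂volume)
        + (∫⁻ z in D, (edist x w) ^ c * (edist x y) ^ (-(c+γ)) *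
            ((edist z w) ^ (-(c+γ)) * (edist y z) ^ (β-(d:ℝ)-α+2*γ)) ∂volume))) ∂volume := by
        apply lintegral_congr
        intro y
        exact hinner y
    _ = (∫⁻ y in D, ∫⁻ z in D, (edist x w) ^ c * (edist x y) ^ (-c) *
            ((edist z w) ^ (-c) * (edist y z) ^ (β-(d:ℝ)-α)) ∂volume ∂volume)
        + (∫⁻ y in D, ∫⁻ z in D, (edist x w) ^ c * (edist x y) ^ (-(c+γ)) *
            ((edist z w) ^ (-c) * (edist y z) ^ (β-(d:ℝ)-α+γ)) ∂volume ∂volume)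
        + ((∫⁻ y in D, ∫⁻ z in D, (edist x w) ^ c * (edist x y) ^ (-c) *
            ((edist z w) ^ (-(c+γ)) * (edist y z) ^ (β-(d:ℝ)-α+γ)) ∂volume ∂volume)
        + (∫⁻ y in D, ∫⁻ z in D, (edist x w) ^ c * (edist x y) ^ (-(c+γ)) *
            ((edist z w) ^ (-(c+γ)) * (edist y z) ^ (β-(d:ℝ)-α+2*γ)) ∂volume ∂volume)) := by
        rw [lintegral_add_left (Measurable.fun_add (measI c c (β-(d:ℝ)-α))
            (measI (c+γ) c (β-(d:ℝ)-α+γ))),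
          lintegral_add_left (measI c c (β-(d:ℝ)-α)),
          lintegral_add_left (measI c (c+γ) (β-(d:ℝ)-α+γ))]
    _ ≤ C₁ + C₂ + (C₃ + C₄) := by
        refine add_le_add (add_le_add ?_ ?_) (add_le_add ?_ ?_)
        · exact hC₁ x hx w hw
        · exact hC₂ x hx w hw
        · exact hC₃ x hx w hw
        · exact hC₄ x hx w hw
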